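/- Let R be a commutative Noetherian ring and M, N finitely generated R-modules such that dim(Supp M) < min{ dim(R/𝔮) : 𝔮 ∈ Ass(N) }. Then Hom_R(M, N) = 0. -/

import Mathlib

/-- If the dimension of the support of `M` is strictly smaller than the dimension of every
associated prime of `N`, then every `R`-linear map `M → N` is zero. -/
theorem hom_eq_zero_of_dim_lt {R : Type*} [CommRing R] [IsNoetherianRing R]
    {M N : Type*} [AddCommGroup M] [Module R M] [Module.Finite R M]
    [AddCommGroup N] [Module R N] [Module.Finite R N]
    (h : ∀ q ∈ associatedPrimes R N,
      Order.krullDim (Module.support R M) < ringKrullDim (R ⧸ q)) :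
    ∀ f : M →ₗ[R] N, f = 0 := by
  intro f
  by_contra hf
  obtain ⟨m, hm⟩ : ∃ m : M, f m ≠ 0 := by
    by_contra h'
    push_neg at h'
    exact hf (LinearMap.ext fun m => h' m)
  obtain ⟨P, hP, hle⟩ := exists_le_isAssociatedPrime_of_isNoetherianRing R (f m) hm
  have hPprime : P.IsPrime := hP.1
  -- ann M ≤ P
  have hann : Module.annihilator R M ≤ P := by
    intro r hr
    apply hle
    rw [Submodule.mem_colon_singleton, Submodule.mem_bot, ← map_smul,
      Module.mem_annihilator.mp hr, map_zero]
  -- P ∈ Supp M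
  have hPsupp : (⟨P, hPprime⟩ : PrimeSpectrum R) ∈ Module.support R M := by
    rw [Module.support_eq_zeroLocus]
    exact hann
  -- build strict mono map
  have key : ringKrullDim (R ⧸ P) ≤ Order.krullDim (Module.support R M) := by
    have hsurj : Function.Surjective (Ideal.Quotient.mk P) := Ideal.Quotient.mk_surjective
    refine Order.krullDim_le_of_strictMono
      (fun p : PrimeSpectrum (R ⧸ P) =>
        (⟨PrimeSpectrum.comap (Ideal.Quotient.mk P) p, ?_⟩ : Module.support R M)) ?_
    · rw [Module.support_eq_zeroLocus]
      refine hann.trans ?_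
      intro r hr
      show Ideal.Quotient.mk P r ∈ p.asIdeal
      rw [Ideal.Quotient.eq_zero_iff_mem.mpr hr]
      exact p.asIdeal.zero_mem
    · intro p q hpq
      show PrimeSpectrum.comap (Ideal.Quotient.mk P) p < PrimeSpectrum.comap _ q
      rw [lt_iff_le_and_ne] at hpq ⊢
      constructor
      · exact fun x hx => hpq.1 hx
      · intro hc
        exact hpq.2 ((PrimeSpectrum.comap_injective_of_surjective _ hsurj) hc)
  exact absurd (h P hP) (not_lt.mpr key)
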